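/- A connected graph G admits a universal clique decomposition if and only if G is trivially perfect. -/

import Mathlib

open SimpleGraph

universe u

/-- A graph is *trivially perfect* if it has no induced subgraph isomorphic to `C₄` or `P₄`. -/
def TriviallyPerfect {V : Type u} (G : SimpleGraph V) : Prop :=
  IsEmpty (SimpleGraph.cycleGraph 4 ↪g G) ∧ IsEmpty (SimpleGraph.pathGraph 4 ↪g G)

/-- A *universal clique decomposition* of a graph `G`: a finite rooted tree (modelled as a
finite partial order in which the set of elements above any element is a chain and which has
a top element, the root) together with a partition of the vertices into nonempty bags such that
adjacent vertices lie in comparable nodes, and each bag is exactly the set of universal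
vertices of the subgraph induced by the union of the bags in the subtree below it. -/
structure UCD {V : Type u} (G : SimpleGraph V) : Type (u + 1) where
  ι : Type u
  [po : PartialOrder ι]
  [ot : OrderTop ι]
  [fin : Fintype ι]
  bag : ι → Set V
  bag_nonempty : ∀ t, (bag t).Nonempty
  bag_disjoint : ∀ s t, s ≠ t → Disjoint (bag s) (bag t)
  bag_cover : ∀ v, ∃ t, v ∈ bag t
  up_chain : ∀ a b c : ι, a ≤ b → a ≤ c → b ≤ c ∨ c ≤ b
  adj_comparable : ∀ v w s t, G.Adj v w → v ∈ bag t → w ∈ bag s → s ≤ t ∨ t ≤ s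
  bag_eq_universal : ∀ t, bag t =
    {v | (∃ s ≤ t, v ∈ bag s) ∧ ∀ w, (∃ s ≤ t, w ∈ bag s) → w ≠ v → G.Adj v w}

attribute [instance] UCD.po UCD.ot UCD.fin

namespace UCD

variable {V : Type u} {G : SimpleGraph V} (U : UCD G)

/-- `D_t`: the union of the bags in the subtree rooted at `t`. -/
def subtreeSet (t : U.ι) : Set V := {v | ∃ s, s ≤ t ∧ v ∈ U.bag s}

/-- `Q_t`: the union of the bags on the path from `t` to the root. -/
def tailSet (t : U.ι) : Set V := {v | ∃ s, t ≤ s ∧ v ∈ U.bag s}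

/-- `t` is a leaf of the decomposition tree. -/
def IsLeaf (t : U.ι) : Prop := ∀ s : U.ι, s ≤ t → s = t

end UCD

/-- `G + S`: the graph obtained from `G` by adding the pairs in `S` as edges. -/
def completes {V : Type u} (G : SimpleGraph V) (S : Set (Sym2 V)) : SimpleGraph V :=
  G ⊔ SimpleGraph.fromEdgeSet S

/-- `S` is a set of non-edges of `G` (unordered pairs of distinct vertices, none an edge). -/
def IsCompletionSet {V : Type u} (G : SimpleGraph V) (S : Set (Sym2 V)) : Prop :=
  (∀ e ∈ S, ¬ e.IsDiag) ∧ Disjoint S G.edgeSet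

/-- `S` is a minimal trivially perfect completion of `G`. -/
def IsMinTPCompletion {V : Type u} (G : SimpleGraph V) (S : Set (Sym2 V)) : Prop :=
  IsCompletionSet G S ∧ TriviallyPerfect (completes G S) ∧
    ∀ S' ⊂ S, ¬ TriviallyPerfect (completes G S')

/-- A vital potential maximal clique of `(G, k)`. -/
def VitalPMC {V : Type u} (G : SimpleGraph V) (k : ℕ) (Ω : Set V) : Prop :=
  ∃ S, IsMinTPCompletion G S ∧ S.ncard ≤ k ∧ Maximal (completes G S).IsClique Ω

namespace UCDProof

variable {V : Type u} {G : SimpleGraph V}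

/-- The closed neighborhood of a vertex. -/
def cn (G : SimpleGraph V) (v : V) : Set V := insert v (G.neighborSet v)

lemma mem_cn {v w : V} : w ∈ cn G v ↔ w = v ∨ G.Adj v w := by
  simp [cn, SimpleGraph.mem_neighborSet]

lemma self_mem_cn (v : V) : v ∈ cn G v := by simp [cn]

lemma mem_cn_comm {v w : V} : w ∈ cn G v ↔ v ∈ cn G w := by
  rw [mem_cn, mem_cn, G.adj_comm, eq_comm]

lemma tp_comparable (hTP : TriviallyPerfect G) {v w : V} (h : G.Adj v w) :
    cn G v ⊆ cn G w ∨ cn G w ⊆ cn G v := by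
  by_contra hc
  push_neg at hc
  obtain ⟨x, hxv, hxw⟩ := Set.not_subset.mp hc.1
  obtain ⟨y, hyw, hyv⟩ := Set.not_subset.mp hc.2
  have hvw : v ∈ cn G w := mem_cn.mpr (Or.inr h.symm)
  have hwv : w ∈ cn G v := mem_cn.mpr (Or.inr h)
  have hxne : x ≠ v := fun hh => hxw (hh ▸ hvw)
  have hyne : y ≠ w := fun hh => hyv (hh ▸ hwv)
  have hvx : G.Adj v x := (mem_cn.mp hxv).resolve_left hxne
  have hwy : G.Adj w y := (mem_cn.mp hyw).resolve_left hyne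
  have hxwne : x ≠ w := fun hh => hxw (by rw [hh]; exact self_mem_cn w)
  have hyvne : y ≠ v := fun hh => hyv (by rw [hh]; exact self_mem_cn v)
  have hxyne : x ≠ y := fun hh => hxw (hh ▸ hyw)
  have hnwx : ¬ G.Adj w x := fun ha => hxw (mem_cn.mpr (Or.inr ha))
  have hnvy : ¬ G.Adj v y := fun ha => hyv (mem_cn.mpr (Or.inr ha))
  have hvwne : v ≠ w := h.ne
  by_cases hxy : G.Adj x y
  · -- C4 on v, x, y, w
    refine hTP.1.elim ⟨⟨![v, x, y, w], ?_⟩, ?_⟩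
    · intro a b hab
      fin_cases a <;> fin_cases b <;> simp only [] at hab ⊢ <;> simp at hab <;>
        first
          | rfl
          | (exfalso; first
              | exact hvwne hab | exact hvwne hab.symm
              | exact hxne hab | exact hxne hab.symm
              | exact hyne hab | exact hyne hab.symm
              | exact hxwne hab | exact hxwne hab.symm
              | exact hyvne hab | exact hyvne hab.symm
              | exact hxyne hab | exact hxyne hab.symm)
    · intro a b
      fin_cases a <;> fin_cases b <;> simp only [Function.Embedding.coeFn_mk] <;>
        (first
          | (apply iff_of_false ?_ (by decide)) | (apply iff_of_true ?_ (by decide))) <;>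
        simp <;>
        first
          | exact G.loopless _
          | assumption
          | exact hvx.symm
          | exact hxy.symm
          | exact hwy.symm
          | exact h.symm
          | exact fun ha => hnwx ha.symm
          | exact fun ha => hnvy ha.symm
  · -- P4 on x, v, w, y
    refine hTP.2.elim ⟨⟨![x, v, w, y], ?_⟩, ?_⟩
    · intro a b hab
      fin_cases a <;> fin_cases b <;> simp only [] at hab ⊢ <;> simp at hab <;>
        first
          | rfl
          | (exfalso; first
              | exact hvwne hab | exact hvwne hab.symm
              | exact hxne hab | exact hxne hab.symm
              | exact hyne hab | exact hyne hab.symm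
              | exact hxwne hab | exact hxwne hab.symm
              | exact hyvne hab | exact hyvne hab.symm
              | exact hxyne hab | exact hxyne hab.symm)
    · intro a b
      fin_cases a <;> fin_cases b <;> simp only [Function.Embedding.coeFn_mk] <;>
        (first
          | (apply iff_of_false ?_ (by rw [SimpleGraph.pathGraph_adj]; decide))
          | (apply iff_of_true ?_ (by rw [SimpleGraph.pathGraph_adj]; decide))) <;>
        simp <;>
        first
          | exact G.loopless _
          | assumption
          | exact hvx.symm
          | exact hwy.symm
          | exact h.symm
          | exact fun ha => hxy ha
          | exact fun ha => hxy ha.symm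
          | exact fun ha => hnwx ha.symm
          | exact fun ha => hnvy ha.symm

lemma exists_univ_vertex [Fintype V] (hG : G.Connected) (hTP : TriviallyPerfect G) :
    ∃ u : V, cn G u = Set.univ := by
  have hne : Nonempty V := hG.nonempty
  obtain ⟨u, hu0⟩ := Set.Finite.exists_maximalFor (fun v => cn G v) Set.univ
    Set.finite_univ Set.univ_nonempty
  have hmax : ∀ y ∈ (Set.univ : Set V), cn G u ⊆ cn G y → cn G u = cn G y :=
    fun y hy h => h.antisymm (hu0.2 hy h)
  have hcl : ∀ y z, y ∈ cn G u → G.Adj y z → z ∈ cn G u := by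
    intro y z hy hyz
    rcases mem_cn.mp hy with rfl | hadj
    · exact mem_cn.mpr (Or.inr hyz)
    · rcases tp_comparable hTP hadj with hsub | hsub
      · have heq := hmax y trivial hsub
        rw [heq]
        exact mem_cn.mpr (Or.inr hyz)
      · exact hsub (mem_cn.mpr (Or.inr hyz))
  refine ⟨u, Set.eq_univ_of_forall fun x => ?_⟩
  obtain ⟨p⟩ := hG.preconnected u x
  have key : ∀ (a b : V), G.Walk a b → a ∈ cn G u → b ∈ cn G u := by
    intro a b p
    induction p with
    | nil => exact id
    | cons h q ih => exact fun ha => ih (hcl _ _ ha h)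
  exact key u x p (self_mem_cn u)

lemma nonempty_ucd [Fintype V] (hG : G.Connected) (hTP : TriviallyPerfect G) :
    Nonempty (UCD G) := by
  obtain ⟨u, hu⟩ := exists_univ_vertex hG hTP
  refine ⟨{
    ι := {A : Set V // ∃ v, A = cn G v}
    po := inferInstance
    ot := { top := ⟨Set.univ, u, hu.symm⟩, le_top := fun a => Set.subset_univ _ }
    fin := Fintype.ofFinite _
    bag := fun A => {v | cn G v = A.1}
    bag_nonempty := ?_
    bag_disjoint := ?_
    bag_cover := fun v => ⟨⟨cn G v, v, rfl⟩, rfl⟩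
    up_chain := ?_
    adj_comparable := ?_
    bag_eq_universal := ?_ }⟩
  · rintro ⟨A, v, rfl⟩
    exact ⟨v, rfl⟩
  · intro s t hst
    rw [Set.disjoint_left]
    intro v hv hv2
    exact hst (Subtype.ext ((hv.symm.trans hv2)))
  · rintro ⟨A, x, rfl⟩ ⟨B, y, rfl⟩ ⟨C, z, rfl⟩ hab hac
    have hxb : x ∈ cn G y := hab (self_mem_cn x)
    have hyx : y ∈ cn G x := mem_cn_comm.mp hxb
    have hyz : y ∈ cn G z := hac hyx
    rcases mem_cn.mp hyz with rfl | hadj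
    · exact Or.inl le_rfl
    · rcases tp_comparable hTP hadj.symm with hs | hs
      · exact Or.inl hs
      · exact Or.inr hs
  · intro v w s t hadj hv hw
    have hv' : cn G v = t.1 := hv
    have hw' : cn G w = s.1 := hw
    rcases tp_comparable hTP hadj with hs | hs
    · right
      show t.1 ⊆ s.1
      rw [← hv', ← hw']
      exact hs
    · left
      show s.1 ⊆ t.1
      rw [← hv', ← hw']
      exact hs
  · rintro ⟨A, u', rfl⟩
    ext v
    simp only [Set.mem_setOf_eq]
    constructor
    · intro hv
      refine ⟨⟨⟨cn G u', u', rfl⟩, le_rfl, hv⟩, ?_⟩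
      intro w hw hne
      obtain ⟨s, hs, hws⟩ := hw
      have hsub : cn G w ⊆ cn G u' := by
        have : cn G w = s.1 := hws
        rw [this]; exact hs
      have : w ∈ cn G u' := hsub (self_mem_cn w)
      rw [← hv] at this
      exact ((mem_cn_comm.mp (mem_cn_comm.mp this)).elim
        (fun hh => absurd hh hne) id : G.Adj v w)
    · rintro ⟨⟨s, hs, hvs⟩, huniv⟩
      have hvsub : cn G v ⊆ cn G u' := by
        have : cn G v = s.1 := hvs
        rw [this]; exact hs
      apply Set.Subset.antisymm hvsub
      intro x hx
      by_cases hxv : x = v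
      · rw [hxv]; exact self_mem_cn v
      rcases mem_cn.mp hx with rfl | hadj
      · -- x = u'
        exact mem_cn_comm.mp (hvsub (self_mem_cn v))
      · rcases tp_comparable hTP hadj with hs2 | hs2
        · -- cn u' ⊆ cn x
          exact mem_cn_comm.mp (hs2 (hvsub (self_mem_cn v)))
        · -- cn x ⊆ cn u'
          have := huniv x ⟨⟨cn G x, x, rfl⟩, hs2, rfl⟩ hxv
          exact mem_cn.mpr (Or.inr this)

lemma adj_of_bag_le (U : UCD G) {v w : V} {s t : U.ι} (hv : v ∈ U.bag t)
    (hw : w ∈ U.bag s) (hst : s ≤ t) (hne : w ≠ v) : G.Adj v w := by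
  have h := U.bag_eq_universal t
  rw [h] at hv
  exact hv.2 w ⟨s, hst, hw⟩ hne

lemma step (U : UCD G) {a b c : U.ι} (hab : a ≤ b ∨ b ≤ a) (hbc : b ≤ c ∨ c ≤ b)
    (hac1 : ¬ a ≤ c) (hac2 : ¬ c ≤ a) : a ≤ b := by
  rcases hab with h | h
  · exact h
  · rcases hbc with h2 | h2
    · rcases U.up_chain b a c h h2 with h3 | h3
      · exact absurd h3 hac1
      · exact absurd h3 hac2
    · exact absurd (le_trans h2 h) hac2

lemma ucd_tp (U : UCD G) : TriviallyPerfect G := by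
  constructor
  · constructor
    intro f
    choose t ht using fun i : Fin 4 => U.bag_cover (f i)
    have hadj : ∀ i j : Fin 4, (cycleGraph 4).Adj i j → (t i ≤ t j ∨ t j ≤ t i) := by
      intro i j hij
      have : G.Adj (f i) (f j) := f.map_rel_iff.mpr hij
      rcases U.adj_comparable _ _ _ _ this (ht i) (ht j) with h | h
      · exact Or.inr h
      · exact Or.inl h
    have hnle : ∀ i j : Fin 4, i ≠ j → ¬ (cycleGraph 4).Adj i j → ¬ t i ≤ t j := by
      intro i j hij hnadj hle
      exact hnadj (f.map_rel_iff.mp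
        ((adj_of_bag_le U (ht j) (ht i) hle (fun hh => hij (f.injective hh))).symm))
    have h01 : t 0 ≤ t 1 :=
      step U (hadj 0 1 (by decide)) (hadj 1 2 (by decide))
        (hnle 0 2 (by decide) (by decide)) (hnle 2 0 (by decide) (by decide))
    have h12 : t 1 ≤ t 2 :=
      step U (hadj 1 2 (by decide)) (hadj 2 3 (by decide))
        (hnle 1 3 (by decide) (by decide)) (hnle 3 1 (by decide) (by decide))
    exact hnle 0 2 (by decide) (by decide) (h01.trans h12)
  · constructor
    intro f
    choose t ht using fun i : Fin 4 => U.bag_cover (f i)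
    have hadj : ∀ i j : Fin 4, (pathGraph 4).Adj i j → (t i ≤ t j ∨ t j ≤ t i) := by
      intro i j hij
      have : G.Adj (f i) (f j) := f.map_rel_iff.mpr hij
      rcases U.adj_comparable _ _ _ _ this (ht i) (ht j) with h | h
      · exact Or.inr h
      · exact Or.inl h
    have hnle : ∀ i j : Fin 4, i ≠ j → ¬ (pathGraph 4).Adj i j → ¬ t i ≤ t j := by
      intro i j hij hnadj hle
      exact hnadj (f.map_rel_iff.mp
        ((adj_of_bag_le U (ht j) (ht i) hle (fun hh => hij (f.injective hh))).symm))
    have pa : ∀ i j : Fin 4, (i.1 + 1 = j.1 ∨ j.1 + 1 = i.1) → (pathGraph 4).Adj i j := by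
      intro i j hij
      exact (SimpleGraph.pathGraph_adj).mpr hij
    have pna : ∀ i j : Fin 4, ¬(i.1 + 1 = j.1 ∨ j.1 + 1 = i.1) → ¬ (pathGraph 4).Adj i j := by
      intro i j hij h
      exact hij ((SimpleGraph.pathGraph_adj).mp h)
    have h12 : t 1 ≤ t 2 :=
      step U (hadj 1 2 (pa 1 2 (by decide))) (hadj 2 3 (pa 2 3 (by decide)))
        (hnle 1 3 (by decide) (pna 1 3 (by decide))) (hnle 3 1 (by decide) (pna 3 1 (by decide)))
    rcases hadj 0 1 (pa 0 1 (by decide)) with h | h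
    · exact hnle 0 2 (by decide) (pna 0 2 (by decide)) (h.trans h12)
    · rcases U.up_chain (t 1) (t 0) (t 2) h h12 with h3 | h3
      · exact hnle 0 2 (by decide) (pna 0 2 (by decide)) h3
      · exact hnle 2 0 (by decide) (pna 2 0 (by decide)) h3

end UCDProof

/-- A connected graph admits a universal clique decomposition iff it is trivially perfect. -/
theorem connected_nonempty_ucd_iff_triviallyPerfect {V : Type u} [Fintype V]
    (G : SimpleGraph V) (hG : G.Connected) :
    Nonempty (UCD G) ↔ TriviallyPerfect G :=
  ⟨fun ⟨U⟩ => UCDProof.ucd_tp U, fun hTP => UCDProof.nonempty_ucd hG hTP⟩
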